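/- Let V be a separable Hilbert space, and suppose A ∈ B(V^N, V^m) has the weighted robust null space property over V of order (k,w) with constants 0 < ρ < 1 and γ > 0, i.e., ‖x_S‖_{2;V} ≤ ρ ‖x_{S^c}‖_{1,w;V}/√k + γ‖Ax‖_{2;V} for all x ∈ V^N and all S ⊆ {1,...,N} with |S|_w ≤ k. Then for all x, z ∈ V^N, ‖z - x‖_{1,w;V} ≤ ((1+ρ)/(1-ρ))(2σ_k(x)_{1,w;V} + ‖z‖_{1,w;V} − ‖x‖_{1,w;V}) + (2γ/(1-ρ))√k ‖A(z−x)‖_{2;V}. -/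

import Mathlib

/-- The `ℓ²`-norm of a `V`-valued vector: `‖x‖_{2;V} = (∑ i ‖x i‖²)^{1/2}`. -/
noncomputable def l2norm {ι : Type*} [Fintype ι] {V : Type*} [NormedAddCommGroup V]
    (x : ι → V) : ℝ := Real.sqrt (∑ i, ‖x i‖ ^ 2)

/-- The weighted `ℓ¹_w`-norm of a `V`-valued vector: `‖x‖_{1,w;V} = ∑ i w i ‖x i‖`. -/
noncomputable def l1wnorm {ι : Type*} [Fintype ι] {V : Type*} [NormedAddCommGroup V]
    (w : ι → ℝ) (x : ι → V) : ℝ := ∑ i, w i * ‖x i‖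

/-- Weighted best `(k,w)`-term approximation error in the `ℓ¹_w`-norm:
`σ_k(x)_{1,w;V} = inf { ‖x − x_S‖_{1,w;V} : |S|_w ≤ k }`. -/
noncomputable def sigmaK {ι : Type*} [Fintype ι] [DecidableEq ι] {V : Type*} [NormedAddCommGroup V]
    (k : ℝ) (w : ι → ℝ) (x : ι → V) : ℝ :=
  sInf {r : ℝ | ∃ S : Finset ι, (∑ i ∈ S, w i ^ 2) ≤ k ∧
    r = l1wnorm w fun i => if i ∈ S then 0 else x i}

/-- The weighted robust null space property over `V` of order `(k,w)` with
constants `ρ` and `γ`. -/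
def wRNSP {N m : ℕ} {V : Type*} [NormedAddCommGroup V] [InnerProductSpace ℂ V]
    (A : (Fin N → V) →L[ℂ] (Fin m → V)) (k : ℝ) (w : Fin N → ℝ) (ρ γ : ℝ) : Prop :=
  ∀ (x : Fin N → V) (S : Finset (Fin N)), (∑ i ∈ S, w i ^ 2) ≤ k →
    l2norm (fun i => if i ∈ S then x i else 0) ≤
      ρ * l1wnorm w (fun i => if i ∈ S then 0 else x i) / Real.sqrt k +
        γ * l2norm (A x)

/-- Weighted rNSP implies the `ℓ¹_w` distance bound. -/
theorem wRNSP_l1_distance_bound {V : Type*} [NormedAddCommGroup V]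
    [InnerProductSpace ℂ V] [CompleteSpace V] {N m : ℕ}
    (A : (Fin N → V) →L[ℂ] (Fin m → V)) (k : ℝ) (hk : 0 < k)
    (w : Fin N → ℝ) (hw : ∀ i, 0 < w i)
    (ρ γ : ℝ) (hρ0 : 0 < ρ) (hρ1 : ρ < 1) (hγ : 0 < γ)
    (h : wRNSP A k w ρ γ) (x z : Fin N → V) :
    l1wnorm w (z - x) ≤
      (1 + ρ) / (1 - ρ) * (2 * sigmaK k w x + l1wnorm w z - l1wnorm w x) +
        2 * γ / (1 - ρ) * Real.sqrt k * l2norm (A (z - x)) := by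
  classical
  -- obtain an optimal support set S for sigmaK
  have hfin : {r : ℝ | ∃ S : Finset (Fin N), (∑ i ∈ S, w i ^ 2) ≤ k ∧
      r = l1wnorm w fun i => if i ∈ S then 0 else x i}.Finite := by
    have hsub : {r : ℝ | ∃ S : Finset (Fin N), (∑ i ∈ S, w i ^ 2) ≤ k ∧
        r = l1wnorm w fun i => if i ∈ S then 0 else x i} ⊆
        (fun S : Finset (Fin N) => l1wnorm w fun i => if i ∈ S then 0 else x i) '' Set.univ := by
      rintro r ⟨S, -, rfl⟩
      exact ⟨S, trivial, rfl⟩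
    exact (Set.finite_univ.image _).subset hsub
  have hne : {r : ℝ | ∃ S : Finset (Fin N), (∑ i ∈ S, w i ^ 2) ≤ k ∧
      r = l1wnorm w fun i => if i ∈ S then 0 else x i}.Nonempty :=
    ⟨_, ∅, by simp [hk.le], rfl⟩
  have hmem := hne.csInf_mem hfin
  obtain ⟨S, hSk, hσ⟩ := hmem
  -- notation
  set v : Fin N → V := z - x with hv
  have hvap : ∀ i, v i = z i - x i := fun i => rfl
  set a : ℝ := ∑ i ∈ S, w i * ‖v i‖ with ha
  set b : ℝ := ∑ i ∈ Sᶜ, w i * ‖v i‖ with hb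
  set σ : ℝ := ∑ i ∈ Sᶜ, w i * ‖x i‖ with hσdef
  have hσ' : sigmaK k w x = σ := by
    rw [sigmaK, hσ, l1wnorm, ← Finset.sum_add_sum_compl S]
    have h1 : ∑ i ∈ S, w i * ‖if i ∈ S then (0 : V) else x i‖ = 0 := by
      apply Finset.sum_eq_zero
      intro i hi
      simp [hi]
    have h2 : ∑ i ∈ Sᶜ, w i * ‖if i ∈ S then (0 : V) else x i‖ = σ := by
      apply Finset.sum_congr rfl
      intro i hi
      simp [Finset.mem_compl.mp hi]
    rw [h1, h2, zero_add]
  have hab : l1wnorm w (z - x) = a + b := by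
    rw [l1wnorm, ← Finset.sum_add_sum_compl S]
  -- Step 1: b ≤ (l1wnorm w z - l1wnorm w x) + a + 2σ
  have step1 : b ≤ (l1wnorm w z - l1wnorm w x) + a + 2 * σ := by
    have hxz : ∑ i ∈ S, w i * ‖x i‖ ≤ ∑ i ∈ S, (w i * ‖z i‖ + w i * ‖v i‖) := by
      apply Finset.sum_le_sum
      intro i _
      rw [← mul_add]
      refine mul_le_mul_of_nonneg_left ?_ (hw i).le
      calc ‖x i‖ = ‖z i - v i‖ := by rw [hvap]; congr 1; abel
        _ ≤ ‖z i‖ + ‖v i‖ := norm_sub_le _ _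
    have hvz : ∑ i ∈ Sᶜ, w i * ‖v i‖ ≤ ∑ i ∈ Sᶜ, (w i * ‖z i‖ + w i * ‖x i‖) := by
      apply Finset.sum_le_sum
      intro i _
      rw [← mul_add]
      refine mul_le_mul_of_nonneg_left ?_ (hw i).le
      rw [hvap]
      exact norm_sub_le _ _
    rw [Finset.sum_add_distrib] at hxz hvz
    have hzsplit : l1wnorm w z = ∑ i ∈ S, w i * ‖z i‖ + ∑ i ∈ Sᶜ, w i * ‖z i‖ := by
      rw [l1wnorm, ← Finset.sum_add_sum_compl S]
    have hxsplit : l1wnorm w x = ∑ i ∈ S, w i * ‖x i‖ + ∑ i ∈ Sᶜ, w i * ‖x i‖ := by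
      rw [l1wnorm, ← Finset.sum_add_sum_compl S]
    rw [hzsplit, hxsplit]
    simp only [hb, hσdef] at *
    linarith
  -- Cauchy–Schwarz: a ≤ √k * l2norm (v restricted to S)
  have hsq : Real.sqrt k > 0 := Real.sqrt_pos.mpr hk
  have hCS : a ≤ Real.sqrt k * l2norm (fun i => if i ∈ S then v i else 0) := by
    have h1 : a ≤ Real.sqrt (∑ i ∈ S, w i ^ 2) * Real.sqrt (∑ i ∈ S, ‖v i‖ ^ 2) :=
      Real.sum_mul_le_sqrt_mul_sqrt S w (fun i => ‖v i‖)
    have h2 : Real.sqrt (∑ i ∈ S, w i ^ 2) ≤ Real.sqrt k := Real.sqrt_le_sqrt hSk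
    have h3 : l2norm (fun i => if i ∈ S then v i else 0) = Real.sqrt (∑ i ∈ S, ‖v i‖ ^ 2) := by
      rw [l2norm]
      congr 1
      rw [← Finset.sum_add_sum_compl S]
      have e1 : ∑ i ∈ S, ‖if i ∈ S then v i else 0‖ ^ 2 = ∑ i ∈ S, ‖v i‖ ^ 2 :=
        Finset.sum_congr rfl fun i hi => by simp [hi]
      have e2 : ∑ i ∈ Sᶜ, ‖if i ∈ S then v i else 0‖ ^ 2 = 0 :=
        Finset.sum_eq_zero fun i hi => by simp [Finset.mem_compl.mp hi]
      rw [e1, e2, add_zero]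
    rw [h3]
    calc a ≤ _ := h1
      _ ≤ Real.sqrt k * Real.sqrt (∑ i ∈ S, ‖v i‖ ^ 2) :=
        mul_le_mul_of_nonneg_right h2 (Real.sqrt_nonneg _)
  -- rNSP
  have hrnsp := h v S hSk
  have hbval : l1wnorm w (fun i => if i ∈ S then 0 else v i) = b := by
    rw [l1wnorm, ← Finset.sum_add_sum_compl S]
    have h1 : ∑ i ∈ S, w i * ‖if i ∈ S then (0 : V) else v i‖ = 0 :=
      Finset.sum_eq_zero fun i hi => by simp [hi]
    have h2 : ∑ i ∈ Sᶜ, w i * ‖if i ∈ S then (0 : V) else v i‖ = b :=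
      Finset.sum_congr rfl fun i hi => by simp [Finset.mem_compl.mp hi]
    rw [h1, h2, zero_add]
  rw [hbval] at hrnsp
  set E : ℝ := l2norm (A v) with hE
  have hE0 : 0 ≤ E := Real.sqrt_nonneg _
  -- combine: a ≤ ρ * b + γ * √k * E
  have hA : a ≤ ρ * b + γ * Real.sqrt k * E := by
    have := mul_le_mul_of_nonneg_left hrnsp hsq.le
    calc a ≤ Real.sqrt k * l2norm (fun i => if i ∈ S then v i else 0) := hCS
      _ ≤ Real.sqrt k * (ρ * b / Real.sqrt k + γ * E) := by
        exact mul_le_mul_of_nonneg_left hrnsp hsq.le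
      _ = ρ * b + γ * Real.sqrt k * E := by
        field_simp
  have h1ρ : (0:ℝ) < 1 - ρ := by linarith
  have hB : (1 - ρ) * b ≤ (l1wnorm w z - l1wnorm w x) + 2 * σ + γ * Real.sqrt k * E := by
    nlinarith [step1, hA]
  rw [hab, hσ']
  rw [show (1 + ρ) / (1 - ρ) * (2 * σ + l1wnorm w z - l1wnorm w x) +
      2 * γ / (1 - ρ) * Real.sqrt k * l2norm (A (z - x)) =
      ((1 + ρ) * (2 * σ + l1wnorm w z - l1wnorm w x) + 2 * γ * Real.sqrt k * E) / (1 - ρ) by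
    rw [hE, hv]; field_simp, le_div_iff₀ h1ρ]
  nlinarith [hA, hB, mul_le_mul_of_nonneg_left hB (by linarith : (0:ℝ) ≤ 1 + ρ),
    mul_nonneg (mul_nonneg hγ.le hsq.le) hE0]
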